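/- Fix α with 0 < α < 1/2. Then lim_{t→∞} ∫_1^t s^{−3α} · exp(−∫_s^t u^{−2α} du) ds = 0. -/

import Mathlib

open Real Filter MeasureTheory

private lemma rpow_contOn (c : ℝ) : ContinuousOn (fun u : ℝ => u ^ c) (Set.Ioi 0) :=
  fun x hx => (Real.continuousAt_rpow_const x c (Or.inl (ne_of_gt hx))).continuousWithinAt

private lemma rpow_intInt {a b c : ℝ} (ha : 0 < a) (hb : 0 < b) :
    IntervalIntegrable (fun u : ℝ => u ^ c) volume a b :=
  ((rpow_contOn c).mono (fun x hx => lt_of_lt_of_le (lt_min ha hb) hx.1)).intervalIntegrable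

theorem tendsto_integral_decay {α : ℝ} (hα0 : 0 < α) (hα : α < 1 / 2) :
    Tendsto (fun t : ℝ =>
        ∫ s in (1 : ℝ)..t, s ^ (-(3 * α)) * Real.exp (-(∫ u in s..t, u ^ (-(2 * α)))))
      atTop (nhds 0) := by
  have h2α : 0 < 1 - 2 * α := by linarith
  -- key bound
  have key : ∀ t : ℝ, 1 ≤ t →
      (∫ s in (1:ℝ)..t, s ^ (-(3*α)) * Real.exp (-(∫ u in s..t, u ^ (-(2*α)))))
        ≤ 2 * t ^ (-α) := by
    intro t ht
    have ht0 : (0:ℝ) < t := lt_of_lt_of_le one_pos ht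
    set F : ℝ → ℝ := fun s => ∫ u in s..t, u ^ (-(2*α)) with hFdef
    -- derivative of F
    have hFderiv : ∀ s : ℝ, 0 < s → HasDerivAt F (-(s ^ (-(2*α)))) s := by
      intro s hs
      have hG : HasDerivAt (fun x => ∫ u in t..x, u ^ (-(2*α))) (s ^ (-(2*α))) s := by
        apply intervalIntegral.integral_hasDerivAt_right (rpow_intInt ht0 hs)
        · exact ⟨Set.Ioi 0, Ioi_mem_nhds hs,
            ((rpow_contOn _).aestronglyMeasurable measurableSet_Ioi)⟩
        · exact Real.continuousAt_rpow_const s _ (Or.inl (ne_of_gt hs))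
      have : F = fun x => -∫ u in t..x, u ^ (-(2*α)) := by
        funext x; rw [hFdef]; exact (intervalIntegral.integral_symm t x)
      rw [this]
      exact hG.neg
    have hFcont : ContinuousOn F (Set.Icc 1 t) := fun s hs =>
      ((hFderiv s (lt_of_lt_of_le one_pos hs.1)).continuousAt).continuousWithinAt
    -- comparison of logs
    have hlog : ∀ s ∈ Set.Icc (1:ℝ) t, α * (Real.log t - Real.log s) ≤ F s / 2 := by
      intro s hs
      have hs0 : (0:ℝ) < s := lt_of_lt_of_le one_pos hs.1
      have hmono : (∫ u in s..t, α * (1/u)) ≤ ∫ u in s..t, (1/2) * u ^ (-(2*α)) := by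
        apply intervalIntegral.integral_mono_on hs.2
        · apply IntervalIntegrable.const_mul
          apply ContinuousOn.intervalIntegrable
          intro x hx
          have hx0 : (0:ℝ) < x := lt_of_lt_of_le (lt_min hs0 ht0) hx.1
          exact (continuousAt_const.div continuousAt_id (ne_of_gt hx0)).continuousWithinAt
        · exact (rpow_intInt hs0 ht0).const_mul _
        · intro u hu
          have hu1 : (1:ℝ) ≤ u := le_trans hs.1 hu.1
          have hu0 : (0:ℝ) < u := lt_of_lt_of_le one_pos hu1
          have h1 : (1:ℝ) ≤ u ^ (1 - 2*α) := Real.one_le_rpow hu1 (by linarith)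
          have h2 : u ^ (1 - 2*α) = u ^ (-(2*α)) * u := by
            rw [show (1 - 2*α) = -(2*α) + 1 by ring, Real.rpow_add_one (ne_of_gt hu0)]
          rw [h2] at h1
          rw [mul_one_div, div_le_iff₀ hu0] at *
          nlinarith [Real.rpow_nonneg (le_of_lt hu0) (-(2*α))]
      have h1div : (∫ u in s..t, α * (1/u)) = α * (Real.log t - Real.log s) := by
        rw [intervalIntegral.integral_const_mul, integral_one_div, Real.log_div (ne_of_gt ht0) (ne_of_gt hs0)]
        intro h
        have := Set.mem_uIcc.mp h
        rcases this with ⟨h1, _⟩ | ⟨h1, _⟩ <;> linarith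
      have h2div : (∫ u in s..t, (1/2) * u ^ (-(2*α))) = F s / 2 := by
        rw [intervalIntegral.integral_const_mul]; rw [hFdef]; ring
      linarith [hmono, h1div ▸ hmono]
    -- pointwise bound on the integrand
    have hpt : ∀ s ∈ Set.Icc (1:ℝ) t,
        s ^ (-(3*α)) * Real.exp (-(F s)) ≤ t ^ (-α) * (s ^ (-(2*α)) * Real.exp (-(F s)/2)) := by
      intro s hs
      have hs0 : (0:ℝ) < s := lt_of_lt_of_le one_pos hs.1
      rw [Real.rpow_def_of_pos hs0, Real.rpow_def_of_pos hs0, Real.rpow_def_of_pos ht0,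
        ← Real.exp_add, ← Real.exp_add, ← Real.exp_add, Real.exp_le_exp]
      have := hlog s hs
      nlinarith [this]
    -- integrability
    have hint1 : IntervalIntegrable (fun s => s ^ (-(3*α)) * Real.exp (-(F s))) volume 1 t := by
      apply ContinuousOn.intervalIntegrable
      rw [Set.uIcc_of_le ht]
      exact (((rpow_contOn (-(3*α))).mono (fun x hx => lt_of_lt_of_le one_pos hx.1)).mul
        ((Real.continuous_exp.comp continuous_neg).comp_continuousOn hFcont))
    have hint2 : IntervalIntegrable (fun s => s ^ (-(2*α)) * Real.exp (-(F s)/2)) volume 1 t := by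
      apply ContinuousOn.intervalIntegrable
      rw [Set.uIcc_of_le ht]
      exact (((rpow_contOn (-(2*α))).mono (fun x hx => lt_of_lt_of_le one_pos hx.1)).mul
        (Real.continuous_exp.comp_continuousOn ((hFcont.neg).div_const 2)))
    -- FTC for the majorant
    have hFTC : (∫ s in (1:ℝ)..t, s ^ (-(2*α)) * Real.exp (-(F s)/2))
        = 2 * Real.exp (-(F t)/2) - 2 * Real.exp (-(F 1)/2) := by
      apply intervalIntegral.integral_eq_sub_of_hasDerivAt
      · intro s hs
        rw [Set.uIcc_of_le ht] at hs
        have hs0 : (0:ℝ) < s := lt_of_lt_of_le one_pos hs.1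
        have h1 : HasDerivAt (fun x => -(F x)/2) (s ^ (-(2*α)) / 2) s := by
          have := ((hFderiv s hs0).neg).div_const 2
          simpa using this
        have h2 := (h1.exp).const_mul 2
        convert h2 using 1
        · rfl
        · ring
      · exact hint2
    have hFt : F t = 0 := intervalIntegral.integral_same
    have hbound2 : (∫ s in (1:ℝ)..t, s ^ (-(2*α)) * Real.exp (-(F s)/2)) ≤ 2 := by
      rw [hFTC, hFt]
      simp only [neg_zero, zero_div, Real.exp_zero, mul_one]
      nlinarith [Real.exp_pos (-(F 1)/2)]
    calc (∫ s in (1:ℝ)..t, s ^ (-(3*α)) * Real.exp (-(F s)))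
        ≤ ∫ s in (1:ℝ)..t, t ^ (-α) * (s ^ (-(2*α)) * Real.exp (-(F s)/2)) := by
          exact intervalIntegral.integral_mono_on ht hint1 (hint2.const_mul _) hpt
      _ = t ^ (-α) * ∫ s in (1:ℝ)..t, s ^ (-(2*α)) * Real.exp (-(F s)/2) := by
          rw [intervalIntegral.integral_const_mul]
      _ ≤ t ^ (-α) * 2 := by
          apply mul_le_mul_of_nonneg_left hbound2 (Real.rpow_nonneg (le_of_lt ht0) _)
      _ = 2 * t ^ (-α) := by ring
  -- nonnegativity
  have hnn : ∀ t : ℝ, 1 ≤ t →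
      0 ≤ ∫ s in (1:ℝ)..t, s ^ (-(3*α)) * Real.exp (-(∫ u in s..t, u ^ (-(2*α)))) := by
    intro t ht
    apply intervalIntegral.integral_nonneg ht
    intro s hs
    have hs0 : (0:ℝ) ≤ s := le_trans zero_le_one hs.1
    positivity
  -- squeeze
  have hupper : Tendsto (fun t : ℝ => 2 * t ^ (-α)) atTop (nhds 0) := by
    have := (tendsto_rpow_neg_atTop hα0).const_mul (2:ℝ)
    simpa using this
  apply tendsto_of_tendsto_of_tendsto_of_le_of_le' tendsto_const_nhds hupper
  · filter_upwards [eventually_ge_atTop (1:ℝ)] with t ht using hnn t ht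
  · filter_upwards [eventually_ge_atTop (1:ℝ)] with t ht using key t ht
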